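/- For every j = 1, …, n+1 one has Ñ_j + N_j + M_j = 0, where N_j = −[∏_{k=1}^{n}(ϑ_k − γ̂_j) · ∏_{k≠j} γ̂_k · ∏_{k=1}^{m}(γ̂_j + η_k) · ∏_{k=1}^{m+1} β̂_k] / [∏_{k=1}^{n} ϑ_k · ∏_{k≠j}(γ̂_k − γ̂_j) · ∏_{k=1}^{m} η_k · ∏_{k=1}^{m+1}(γ̂_j + β̂_k)], M_j = [∏_{k=1}^{m}(γ̂_j + η_k) · ∏_{k=1}^{n}(ϑ_k − γ̂_j) · ∏_{k=1}^{m+1} β̂_k · ∏_{k=1}^{n+1} γ̂_k] / [∏_{k=1}^{m} η_k · ∏_{k=1}^{n} ϑ_k · ∏_{k=1}^{m+1}(γ̂_j + β̃_k) · ∏_{k≠j}(γ̂_k − γ̂_j)] · ∑_{i=1}^{m+1} [∏_{k=1}^{m+1}(β̂_i − β̃_k)] / [β̂_i (β̂_i + γ̂_j) · ∏_{k≠i}(β̂_i − β̂_k)], and Ñ_j = [∏_{k=1}^{m+1} β̃_k · ∏_{k=1}^{n+1} γ̃_k · ∏_{k=1}^{m}(γ̂_j + η_k) · ∏_{k=1}^{n}(ϑ_k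 − γ̂_j)] / [∏_{k=1}^{m} η_k · ∏_{k=1}^{n} ϑ_k · ∏_{k=1}^{m+1}(γ̂_j + β̃_k) · ∏_{k≠j}(γ̂_k − γ̂_j)] · ∑_{i=1}^{n+1} [∏_{k=1, k≠j}^{n+1}(γ̂_k − γ̃_i)] / [γ̃_i · ∏_{k≠i}(γ̃_k − γ̃_i)]. -/

import Mathlib

open Polynomial Finset

lemma lagrange_eval (s : Finset ℝ) (f : ℝ[X]) (hf : f.degree < s.card) (x : ℝ) :
    f.eval x = ∑ y ∈ s, f.eval y * ∏ z ∈ s.erase y, (x - z) / (y - z) := by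
  have h : f = Lagrange.interpolate s id (fun y => f.eval y) :=
    Lagrange.eq_interpolate (Set.injOn_id _) hf
  conv_lhs => rw [h]
  rw [Lagrange.interpolate_apply, eval_finset_sum]
  refine Finset.sum_congr rfl fun y hy => ?_
  rw [eval_mul, eval_C, Lagrange.basis, eval_prod]
  congr 1
  refine Finset.prod_congr rfl fun z hz => ?_
  simp [Lagrange.basisDivisor, div_eq_mul_inv, mul_comm]

lemma prod_neg' {ι : Type*} (s : Finset ι) (f : ι → ℝ) :
    ∏ i ∈ s, -f i = (-1) ^ s.card * ∏ i ∈ s, f i := by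
  calc ∏ i ∈ s, -f i = ∏ i ∈ s, (-1 : ℝ) * f i :=
        Finset.prod_congr rfl fun i _ => (neg_one_mul _).symm
    _ = _ := by rw [Finset.prod_mul_distrib, Finset.prod_const]

lemma key1 {m : ℕ} (βt βh : Fin (m + 1) → ℝ) (g : ℝ) (hg : 0 < g)
    (hpos : ∀ k, 0 < βh k) (hinj : Function.Injective βh) :
    (∑ i : Fin (m + 1), (∏ k, (βh i - βt k)) /
        (βh i * (βh i + g) * ∏ k ∈ Finset.univ.erase i, (βh i - βh k)))
      = -(∏ k, βt k) / ((∏ k, βh k) * g)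
        + (∏ k, (g + βt k)) / (g * ∏ k, (g + βh k)) := by
  classical
  set f : ℝ[X] := Lagrange.nodal Finset.univ βt with hf
  have hgmem : -g ∉ Finset.univ.image βh := by
    simp only [Finset.mem_image, not_exists]
    intro k ⟨_, h⟩
    nlinarith [hpos k]
  have hcardim : (Finset.univ.image βh).card = m + 1 := by
    rw [Finset.card_image_of_injective _ hinj, Finset.card_univ, Fintype.card_fin]
  set s : Finset ℝ := insert (-g) (Finset.univ.image βh) with hs
  have hcards : s.card = m + 2 := by
    rw [hs, Finset.card_insert_of_notMem hgmem, hcardim]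
  have hdeg : f.degree < s.card := by
    rw [hf, Lagrange.degree_nodal, hcards, Finset.card_univ, Fintype.card_fin]
    exact_mod_cast Nat.lt_succ_self (m + 1)
  have raw := lagrange_eval s f hdeg 0
  rw [hs, Finset.sum_insert hgmem, Finset.erase_insert hgmem,
    Finset.sum_image (fun a _ b _ h => hinj h)] at raw
  -- the -g term
  have hcterm : f.eval (-g) * ∏ z ∈ Finset.univ.image βh, (0 - z) / (-g - z)
      = ((-1 : ℝ) ^ (m + 1) * ∏ k, (g + βt k)) * ((∏ k, βh k) / ∏ k, (g + βh k)) := by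
    rw [Finset.prod_image (fun a _ b _ h => hinj h)]
    have h1 : ∀ k ∈ (Finset.univ : Finset (Fin (m + 1))),
        (0 - βh k) / (-g - βh k) = βh k / (g + βh k) := by
      intro k _
      rw [show (0 - βh k) = -(βh k) by ring, show (-g - βh k) = -(g + βh k) by ring,
        neg_div_neg_eq]
    rw [Finset.prod_congr rfl h1, Finset.prod_div_distrib]
    have h2 : f.eval (-g) = (-1 : ℝ) ^ (m + 1) * ∏ k, (g + βt k) := by
      rw [hf, Lagrange.eval_nodal,
        show ((-1 : ℝ) ^ (m + 1)) = (-1 : ℝ) ^ (Finset.univ : Finset (Fin (m + 1))).card by simp,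
        ← prod_neg']
      exact Finset.prod_congr rfl fun k _ => by ring
    rw [h2]
  -- the i terms
  have hterm : ∀ i : Fin (m + 1),
      f.eval (βh i) * ∏ z ∈ (insert (-g) (Finset.univ.image βh)).erase (βh i),
        (0 - z) / (βh i - z)
      = ((-1 : ℝ) ^ m * (g * ∏ k, βh k)) *
          ((∏ k, (βh i - βt k)) /
            (βh i * (βh i + g) * ∏ k ∈ Finset.univ.erase i, (βh i - βh k))) := by
    intro i
    have hne : -g ≠ βh i := by nlinarith [hpos i]
    have hnm : -g ∉ (Finset.univ.image βh).erase (βh i) :=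
      fun h => hgmem (Finset.mem_of_mem_erase h)
    rw [Finset.erase_insert_of_ne hne, Finset.prod_insert hnm,
      ← Finset.image_erase hinj, Finset.prod_image (fun a _ b _ h => hinj h)]
    have h1 : ∀ k ∈ Finset.univ.erase i, (0 - βh k) / (βh i - βh k)
        = -βh k / (βh i - βh k) := by
      intro k _; rw [zero_sub]
    rw [Finset.prod_congr rfl h1, Finset.prod_div_distrib, prod_neg']
    have h2 : f.eval (βh i) = ∏ k, (βh i - βt k) := by
      rw [hf, Lagrange.eval_nodal]
    have hcarde : (Finset.univ.erase i).card = m := by simp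
    have h3 : ∏ k ∈ Finset.univ.erase i, βh k = (∏ k, βh k) / βh i := by
      rw [eq_div_iff (hpos i).ne', mul_comm, Finset.mul_prod_erase _ _ (Finset.mem_univ i)]
    rw [h2, hcarde, h3]
    have hD : ∏ k ∈ Finset.univ.erase i, (βh i - βh k) ≠ 0 := by
      refine Finset.prod_ne_zero_iff.mpr fun k hk => ?_
      exact sub_ne_zero_of_ne (fun h => (Finset.mem_erase.mp hk).1 (hinj h.symm))
    have hβi : βh i ≠ 0 := (hpos i).ne'
    have hβig : βh i + g ≠ 0 := (by nlinarith [hpos i] : (0:ℝ) < βh i + g).ne'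
    field_simp
    ring
  -- rewrite raw
  have hsum := Finset.sum_congr rfl fun i (_ : i ∈ (Finset.univ : Finset (Fin (m+1)))) => hterm i
  rw [hsum, ← Finset.mul_sum, hcterm] at raw
  have h0 : f.eval 0 = (-1 : ℝ) ^ (m + 1) * ∏ k, βt k := by
    rw [hf, Lagrange.eval_nodal,
      show ((-1 : ℝ) ^ (m + 1)) = (-1 : ℝ) ^ (Finset.univ : Finset (Fin (m + 1))).card by simp,
      ← prod_neg']
    exact Finset.prod_congr rfl fun k _ => by ring
  rw [h0] at raw
  -- now cancel the sign and solve
  have hBh : (∏ k, βh k) ≠ 0 := Finset.prod_ne_zero_iff.mpr fun k _ => (hpos k).ne'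
  have hPh : (∏ k, (g + βh k)) ≠ 0 := by
    refine Finset.prod_ne_zero_iff.mpr fun k _ => ?_
    have := hpos k; positivity
  have hε : ((-1 : ℝ) ^ m) ≠ 0 := by simp
  set S := ∑ i : Fin (m + 1), (∏ k, (βh i - βt k)) /
      (βh i * (βh i + g) * ∏ k ∈ Finset.univ.erase i, (βh i - βh k)) with hS
  -- raw : (-1)^(m+1) * Bt = (-1)^(m+1) * Pt * (Bh / Ph) + ((-1)^m * (g * Bh)) * S
  have raw2 : -(∏ k, βt k) = -((∏ k, (g + βt k)) * ((∏ k, βh k) / ∏ k, (g + βh k)))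
      + (g * ∏ k, βh k) * S := by
    apply mul_left_cancel₀ hε
    have : ((-1 : ℝ) ^ (m + 1)) = (-1) * (-1 : ℝ) ^ m := by ring
    rw [this] at raw
    linear_combination raw
  have hgBh : g * (∏ k, βh k) ≠ 0 := by
    exact mul_ne_zero hg.ne' hBh
  have hS' : S = ((∏ k, (g + βt k)) * ((∏ k, βh k) / ∏ k, (g + βh k)) - ∏ k, βt k)
      / (g * ∏ k, βh k) := by
    rw [eq_div_iff hgBh]
    linarith [raw2]
  rw [hS']
  field_simp
  ring
lemma key2 {n : ℕ} (γt γh : Fin (n + 1) → ℝ) (j : Fin (n + 1))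
    (hpos : ∀ k, 0 < γt k) (hinj : Function.Injective γt) :
    (∑ i : Fin (n + 1), (∏ k ∈ Finset.univ.erase j, (γh k - γt i)) /
        (γt i * ∏ k ∈ Finset.univ.erase i, (γt k - γt i)))
      = (∏ k ∈ Finset.univ.erase j, γh k) / ∏ k, γt k := by
  classical
  set f : ℝ[X] := Lagrange.nodal (Finset.univ.erase j) γh with hf
  have hcard : (Finset.univ.erase j).card = n := by
    simp
  have hpow : ((-1 : ℝ) ^ n) = (-1 : ℝ) ^ (Finset.univ.erase j).card := by rw [hcard]
  have hcardim : (Finset.univ.image γt).card = n + 1 := by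
    rw [Finset.card_image_of_injective _ hinj, Finset.card_univ, Fintype.card_fin]
  have hdeg : f.degree < (Finset.univ.image γt).card := by
    rw [hf, Lagrange.degree_nodal, hcard, hcardim]
    exact_mod_cast Nat.lt_succ_self n
  have raw := lagrange_eval (Finset.univ.image γt) f hdeg 0
  rw [Finset.sum_image (fun a _ b _ h => hinj h)] at raw
  have hterm : ∀ i : Fin (n + 1),
      f.eval (γt i) * ∏ z ∈ (Finset.univ.image γt).erase (γt i), (0 - z) / (γt i - z)
      = (∏ k, γt k) * ((-1 : ℝ) ^ n *
          ((∏ k ∈ Finset.univ.erase j, (γh k - γt i)) /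
            (γt i * ∏ k ∈ Finset.univ.erase i, (γt k - γt i)))) := by
    intro i
    rw [← Finset.image_erase hinj, Finset.prod_image (fun a _ b _ h => hinj h)]
    have h1 : ∀ k ∈ Finset.univ.erase i, (0 - γt k) / (γt i - γt k)
        = γt k / (γt k - γt i) := by
      intro k _
      rw [show (0 - γt k) = -(γt k) by ring, show (γt i - γt k) = -(γt k - γt i) by ring,
        neg_div_neg_eq]
    rw [Finset.prod_congr rfl h1, Finset.prod_div_distrib]
    have h2 : f.eval (γt i) = (-1 : ℝ) ^ n * ∏ k ∈ Finset.univ.erase j, (γh k - γt i) := by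
      rw [hf, Lagrange.eval_nodal, hpow, ← prod_neg']
      exact Finset.prod_congr rfl fun k _ => by ring
    have hγti : γt i ≠ 0 := (hpos i).ne'
    have h3 : ∏ k ∈ Finset.univ.erase i, γt k = (∏ k, γt k) / γt i := by
      rw [eq_div_iff hγti, mul_comm, Finset.mul_prod_erase _ _ (Finset.mem_univ i)]
    rw [h2, h3]
    have hD : ∏ k ∈ Finset.univ.erase i, (γt k - γt i) ≠ 0 := by
      refine Finset.prod_ne_zero_iff.mpr fun k hk => ?_
      exact sub_ne_zero_of_ne (fun h => (Finset.mem_erase.mp hk).1 (hinj h))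
    field_simp
  rw [Finset.sum_congr rfl fun i _ => hterm i, ← Finset.mul_sum] at raw
  have h0 : f.eval 0 = (-1 : ℝ) ^ n * ∏ k ∈ Finset.univ.erase j, γh k := by
    rw [hf, Lagrange.eval_nodal, hpow, ← prod_neg']
    exact Finset.prod_congr rfl fun k _ => by ring
  rw [h0, ← Finset.mul_sum] at raw
  have hGt : (∏ k, γt k) ≠ 0 :=
    Finset.prod_ne_zero_iff.mpr fun k _ => (hpos k).ne'
  have hε : ((-1 : ℝ) ^ n) ≠ 0 := by
    simp
  have key : (∏ k ∈ Finset.univ.erase j, γh k) = (∏ k, γt k) *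
      ∑ i : Fin (n + 1), (∏ k ∈ Finset.univ.erase j, (γh k - γt i)) /
        (γt i * ∏ k ∈ Finset.univ.erase i, (γt k - γt i)) := by
    apply mul_left_cancel₀ hε
    rw [raw]; ring
  rw [key, mul_comm, mul_div_assoc, div_self hGt, mul_one]

lemma chain {m : ℕ} (β : Fin (m + 1) → ℝ) (η : Fin m → ℝ) (h0 : 0 < β 0)
    (hint : ∀ k : Fin m, β k.castSucc < η k ∧ η k < β k.succ) :
    Function.Injective β ∧ (∀ k, 0 < β k) ∧ (∀ k, 0 < η k) := by
  have hmono : StrictMono β :=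
    Fin.strictMono_iff_lt_succ.mpr fun i => lt_trans (hint i).1 (hint i).2
  have hβ : ∀ k, 0 < β k := fun k => lt_of_lt_of_le h0 (hmono.monotone (Fin.zero_le k))
  exact ⟨hmono.injective, hβ, fun k => lt_trans (hβ _) (hint k).1⟩


/-- Second family of identities in (C.15), from the proof of Corollary 3.2:
`Ñ_j + N_j + M_j = 0` for `j = 1, …, n+1`, where `N_j` is the coefficient from (3.5),
and `M_j`, `Ñ_j` are the coefficients `M_j^1` from (3.24) and `Ñ_j^1` from (3.27)
evaluated at `y = b_1`. -/
theorem stmt_16 (m n : ℕ) (hm : 1 ≤ m) (hn : 1 ≤ n)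
    (η : Fin m → ℝ) (ϑ : Fin n → ℝ)
    (βt : Fin (m + 1) → ℝ) (γt : Fin (n + 1) → ℝ)
    (βh : Fin (m + 1) → ℝ) (γh : Fin (n + 1) → ℝ)
    (hβt0 : 0 < βt 0)
    (hβtint : ∀ k : Fin m, βt k.castSucc < η k ∧ η k < βt k.succ)
    (hγt0 : 0 < γt 0)
    (hγtint : ∀ k : Fin n, γt k.castSucc < ϑ k ∧ ϑ k < γt k.succ)
    (hβh0 : 0 < βh 0)
    (hβhint : ∀ k : Fin m, βh k.castSucc < η k ∧ η k < βh k.succ)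
    (hγh0 : 0 < γh 0)
    (hγhint : ∀ k : Fin n, γh k.castSucc < ϑ k ∧ ϑ k < γh k.succ)
    (N : Fin (n + 1) → ℝ)
    (hN : ∀ j, N j =
      -(((∏ k, (ϑ k - γh j)) * (∏ k ∈ Finset.univ.erase j, γh k) *
          (∏ k, (γh j + η k)) * (∏ k, βh k)) /
        ((∏ k, ϑ k) * (∏ k ∈ Finset.univ.erase j, (γh k - γh j)) *
          (∏ k, η k) * (∏ k, (γh j + βh k)))))
    (M : Fin (n + 1) → ℝ)
    (hM : ∀ j, M j =
      (((∏ k, (γh j + η k)) * (∏ k, (ϑ k - γh j)) * (∏ k, βh k) * (∏ k, γh k)) /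
        ((∏ k, η k) * (∏ k, ϑ k) * (∏ k, (γh j + βt k)) *
          (∏ k ∈ Finset.univ.erase j, (γh k - γh j)))) *
      (∑ i : Fin (m + 1), (∏ k, (βh i - βt k)) /
        (βh i * (βh i + γh j) * ∏ k ∈ Finset.univ.erase i, (βh i - βh k))))
    (Nt : Fin (n + 1) → ℝ)
    (hNt : ∀ j, Nt j =
      (((∏ k, βt k) * (∏ k, γt k) * (∏ k, (γh j + η k)) * (∏ k, (ϑ k - γh j))) /
        ((∏ k, η k) * (∏ k, ϑ k) * (∏ k, (γh j + βt k)) *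
          (∏ k ∈ Finset.univ.erase j, (γh k - γh j)))) *
      (∑ i : Fin (n + 1), (∏ k ∈ Finset.univ.erase j, (γh k - γt i)) /
        (γt i * ∏ k ∈ Finset.univ.erase i, (γt k - γt i)))) :
    ∀ j : Fin (n + 1), Nt j + N j + M j = 0 := by
  intro j
  obtain ⟨hβtinj, hβtpos, hηpos⟩ := chain βt η hβt0 hβtint
  obtain ⟨hβhinj, hβhpos, _⟩ := chain βh η hβh0 hβhint
  obtain ⟨hγtinj, hγtpos, hϑpos⟩ := chain γt ϑ hγt0 hγtint
  obtain ⟨hγhinj, hγhpos, _⟩ := chain γh ϑ hγh0 hγhint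
  have hg : 0 < γh j := hγhpos j
  rw [hNt j, hN j, hM j, key1 βt βh (γh j) hg hβhpos hβhinj, key2 γt γh j hγtpos hγtinj]
  have hGh : γh j * ∏ k ∈ Finset.univ.erase j, γh k = ∏ k, γh k :=
    Finset.mul_prod_erase _ _ (Finset.mem_univ j)
  rw [← hGh]
  have hEη : (∏ k, η k) ≠ 0 := Finset.prod_ne_zero_iff.mpr fun k _ => (hηpos k).ne'
  have hEϑ : (∏ k, ϑ k) ≠ 0 := Finset.prod_ne_zero_iff.mpr fun k _ => (hϑpos k).ne'
  have hBt : (∏ k, βt k) ≠ 0 := Finset.prod_ne_zero_iff.mpr fun k _ => (hβtpos k).ne'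
  have hBh : (∏ k, βh k) ≠ 0 := Finset.prod_ne_zero_iff.mpr fun k _ => (hβhpos k).ne'
  have hGt : (∏ k, γt k) ≠ 0 := Finset.prod_ne_zero_iff.mpr fun k _ => (hγtpos k).ne'
  have hPt : (∏ k, (γh j + βt k)) ≠ 0 :=
    Finset.prod_ne_zero_iff.mpr fun k _ => (add_pos hg (hβtpos k)).ne'
  have hPh : (∏ k, (γh j + βh k)) ≠ 0 :=
    Finset.prod_ne_zero_iff.mpr fun k _ => (add_pos hg (hβhpos k)).ne'
  have hD : (∏ k ∈ Finset.univ.erase j, (γh k - γh j)) ≠ 0 := by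
    refine Finset.prod_ne_zero_iff.mpr fun k hk => ?_
    exact sub_ne_zero_of_ne fun h => (Finset.mem_erase.mp hk).1 (hγhinj h)
  field_simp
  ring
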